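/- For all real x, the series ∑_{q=0}^∞ (1+2q) j_q(x)² converges to 1, where j_q is the spherical Bessel function of the first kind of order q. -/

import Mathlib

open Finset Polynomial

/-! ### Combinatorial preliminaries -/

/-- Nat Chu-Vandermonde in descFactorial form. -/
private lemma cv_nat (m n : ℕ) :
    ∑ i ∈ range (m+1), m.choose i * (n.descFactorial i * n.descFactorial (m - i))
      = (2*n).descFactorial m := by
  have h : ∀ i ∈ range (m+1),
      m.choose i * (n.descFactorial i * n.descFactorial (m-i))
        = m.factorial * (n.choose i * n.choose (m-i)) := by
    intro i hi
    rw [mem_range, Nat.lt_succ_iff] at hi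
    rw [Nat.descFactorial_eq_factorial_mul_choose, Nat.descFactorial_eq_factorial_mul_choose]
    rw [← Nat.choose_mul_factorial_mul_factorial hi]
    ring
  rw [Finset.sum_congr rfl h, ← Finset.mul_sum,
    Nat.descFactorial_eq_factorial_mul_choose]
  congr 1
  rw [two_mul, Nat.add_choose_eq, Finset.Nat.sum_antidiagonal_eq_sum_range_succ_mk]

/-- Real Chu-Vandermonde for descending Pochhammer symbols. -/
private lemma cv_real (m : ℕ) (x : ℝ) :
    ∑ i ∈ range (m+1), (m.choose i : ℝ) *
      ((descPochhammer ℝ i).eval x * (descPochhammer ℝ (m-i)).eval x)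
      = (descPochhammer ℝ m).eval (2*x) := by
  have hpoly : (∑ i ∈ range (m+1), (m.choose i : ℝ[X]) *
      (descPochhammer ℝ i * descPochhammer ℝ (m-i)))
      = (descPochhammer ℝ m).comp (C 2 * X) := by
    have key : ∀ n : ℕ, (∑ i ∈ range (m+1), (m.choose i : ℝ[X]) *
        (descPochhammer ℝ i * descPochhammer ℝ (m-i))).eval (n : ℝ)
          = ((descPochhammer ℝ m).comp (C 2 * X)).eval (n : ℝ) := by
      intro n
      rw [eval_finset_sum, eval_comp]
      simp only [eval_mul, eval_natCast, eval_C, eval_X]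
      have h2 : (2 : ℝ) * n = ((2*n : ℕ) : ℝ) := by push_cast; ring
      rw [h2, descPochhammer_eval_eq_descFactorial]
      simp only [descPochhammer_eval_eq_descFactorial]
      rw [← cv_nat m n]
      push_cast
      ring
    have hz : (∑ i ∈ range (m+1), (m.choose i : ℝ[X]) *
        (descPochhammer ℝ i * descPochhammer ℝ (m-i)))
        - (descPochhammer ℝ m).comp (C 2 * X) = 0 := by
      apply Polynomial.eq_zero_of_infinite_isRoot
      apply Set.Infinite.mono (s := Set.range ((↑) : ℕ → ℝ))
      · rintro _ ⟨n, rfl⟩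
        simp [IsRoot, key n]
      · exact Set.infinite_range_of_injective Nat.cast_injective
    exact sub_eq_zero.mp hz
  have := congrArg (fun p : ℝ[X] => p.eval x) hpoly
  simpa [eval_finset_sum, eval_comp] using this

/-- Partial alternating sum of binomial coefficients. -/
private lemma alt_partial (s : ℕ) : ∀ m : ℕ,
    ∑ j ∈ range (m+1), (-1 : ℤ)^j * (s+1).choose j = (-1)^m * s.choose m := by
  intro m
  induction m with
  | zero => simp
  | succ m ih =>
    rw [Finset.sum_range_succ, ih, Nat.choose_succ_succ]
    push_cast
    ring

/-- The outer alternating identity. -/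
private lemma outer_sum (n : ℕ) :
    ∑ j ∈ range (n+1), (-1 : ℤ)^j * ((1 + 2*(n-j : ℕ)) * (2*n+1).choose j)
      = if n = 0 then 1 else 0 := by
  rcases Nat.eq_zero_or_pos n with rfl | hn
  · simp
  · simp only [if_neg hn.ne']
    have hsplit : ∀ j ∈ range (n+1),
        (-1 : ℤ)^j * ((1 + 2*(n-j : ℕ)) * (2*n+1).choose j)
          = (2*n+1) * ((-1)^j * (2*n+1).choose j)
            - 2 * ((-1)^j * (j * (2*n+1).choose j)) := by
      intro j hj
      rw [mem_range, Nat.lt_succ_iff] at hj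
      have : ((n - j : ℕ) : ℤ) = (n : ℤ) - j := by
        rw [Nat.cast_sub hj]
      rw [this]; ring
    rw [Finset.sum_congr rfl hsplit, Finset.sum_sub_distrib, ← Finset.mul_sum, ← Finset.mul_sum]
    have hA : ∑ j ∈ range (n+1), (-1 : ℤ)^j * (2*n+1).choose j
        = (-1)^n * (2*n).choose n := by
      have := alt_partial (2*n) n
      simpa using this
    have hB : ∑ j ∈ range (n+1), (-1 : ℤ)^j * (j * (2*n+1).choose j)
        = (2*n+1) * ((-1)^n * (2*n-1).choose (n-1)) := by
      rw [Finset.sum_range_succ']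
      simp only [Nat.cast_zero, zero_mul, mul_zero, add_zero, pow_zero]
      have hterm : ∀ j, (-1 : ℤ)^(j+1) * ((j+1 : ℕ) * (2*n+1).choose (j+1))
          = -((2*n+1) * ((-1)^j * (2*n).choose j)) := by
        intro j
        have h := Nat.add_one_mul_choose_eq (2*n) j
        have h' : ((2*n+1 : ℕ) : ℤ) * (2*n).choose j = (2*n+1).choose (j+1) * (j+1) := by
          exact_mod_cast congrArg (Nat.cast : ℕ → ℤ) h
        push_cast at h' ⊢
        rw [pow_succ]
        linear_combination (-1:ℤ)^j * h'
      rw [Finset.sum_congr rfl (fun j _ => hterm j), Finset.sum_neg_distrib, ← Finset.mul_sum]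
      have hrange : range n = range ((n-1)+1) := by congr 1; omega
      have hA' : ∑ j ∈ range n, (-1 : ℤ)^j * (2*n).choose j
          = (-1)^(n-1) * (2*n-1).choose (n-1) := by
        rw [hrange]
        have := alt_partial (2*n-1) (n-1)
        rw [show 2*n-1+1 = 2*n by omega] at this
        exact this
      rw [hA']
      have hsign : (-1 : ℤ)^(n-1) = (-1)^n * (-1) := by
        obtain ⟨k, rfl⟩ : ∃ k, n = k+1 := ⟨n-1, by omega⟩
        simp [pow_succ]
      rw [hsign]; ring
    rw [hA, hB]
    have hc : (2*n).choose n = 2 * (2*n-1).choose (n-1) := by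
      have hp : (2*n).choose n = (2*n-1).choose (n-1) + (2*n-1).choose n := by
        rw [show 2*n = (2*n-1)+1 by omega, show n = (n-1)+1 by omega]
        rw [Nat.choose_succ_succ']
        congr 2 <;> omega
      have hs : (2*n-1).choose n = (2*n-1).choose (n-1) := by
        rw [← Nat.choose_symm (by omega : n ≤ 2*n-1)]
        congr 1; omega
      omega
    rw [hc]
    push_cast
    ring

/-! ### Gamma function facts -/

private lemma gamma_add_nat_eq (c : ℝ) (hc : 0 < c) (k : ℕ) :
    Real.Gamma (c + k) = (descPochhammer ℝ k).eval (c + k - 1) * Real.Gamma c := by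
  induction k with
  | zero => simp
  | succ k ih =>
    have h1 : c + ((k+1 : ℕ) : ℝ) = (c + k) + 1 := by push_cast; ring
    have hck : (0:ℝ) < c + k := by positivity
    rw [h1, Real.Gamma_add_one hck.ne', ih]
    rw [descPochhammer_succ_left]
    rw [show c + (k:ℝ) + 1 - 1 = c + (k:ℝ) by ring]
    simp only [eval_mul, eval_X, eval_comp, eval_sub, eval_one]
    ring

private lemma gamma_factorial_le (c : ℝ) (hc : 1 ≤ c) (k : ℕ) :
    Real.Gamma c * k.factorial ≤ Real.Gamma (c + k) := by
  induction k with
  | zero => simp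
  | succ k ih =>
    have hck : (0:ℝ) < c + k := by positivity
    have h1 : c + ((k+1 : ℕ) : ℝ) = (c + k) + 1 := by push_cast; ring
    rw [h1, Real.Gamma_add_one hck.ne']
    have hk1 : ((k+1 : ℕ) : ℝ) ≤ c + k := by push_cast; linarith
    have hΓpos : 0 < Real.Gamma (c + k) := Real.Gamma_pos_of_pos hck
    calc Real.Gamma c * (k+1 : ℕ).factorial
        = ((k+1 : ℕ) : ℝ) * (Real.Gamma c * k.factorial) := by
          rw [Nat.factorial_succ]; push_cast; ring
      _ ≤ (c + k) * Real.Gamma (c + k) := by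
          apply mul_le_mul hk1 ih (by positivity) (by linarith)

/-! ### The inner Chu-Vandermonde identity -/

private lemma sph_inner_sum (q m : ℕ) :
    ∑ ij ∈ Finset.HasAntidiagonal.antidiagonal m, (1:ℝ) /
        ((ij.1.factorial * Real.Gamma ((ij.1:ℝ) + q + 3/2)) *
         (ij.2.factorial * Real.Gamma ((ij.2:ℝ) + q + 3/2)))
      = ((2*(q+m)+1).choose m : ℝ) / Real.Gamma (((q+m:ℕ):ℝ) + 3/2)^2 := by
  set n := q + m with hn
  set a : ℝ := (n:ℝ) + 1/2 with ha
  set G : ℝ := Real.Gamma ((n:ℝ) + 3/2) with hG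
  have hGpos : 0 < G := Real.Gamma_pos_of_pos (by positivity)
  have key : ∀ i j : ℕ, i + j = m →
      (1:ℝ) / ((i.factorial * Real.Gamma ((i:ℝ)+q+3/2)) *
          (j.factorial * Real.Gamma ((j:ℝ)+q+3/2)))
        = ((descPochhammer ℝ i).eval a * (descPochhammer ℝ j).eval a) /
            (i.factorial * j.factorial) / G^2 := by
    intro i j hij
    have hΓi : 0 < Real.Gamma ((i:ℝ)+q+3/2) := Real.Gamma_pos_of_pos (by positivity)
    have hΓj : 0 < Real.Gamma ((j:ℝ)+q+3/2) := Real.Gamma_pos_of_pos (by positivity)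
    have h1 : G = (descPochhammer ℝ j).eval a * Real.Gamma ((i:ℝ)+q+3/2) := by
      have h := gamma_add_nat_eq ((i:ℝ)+q+3/2) (by positivity) j
      rw [hG, show (n:ℝ)+3/2 = ((i:ℝ)+q+3/2) + j by
        rw [hn, ← hij]; push_cast; ring, h]
      congr 2
      rw [ha, hn, ← hij]; push_cast; ring
    have h2 : G = (descPochhammer ℝ i).eval a * Real.Gamma ((j:ℝ)+q+3/2) := by
      have h := gamma_add_nat_eq ((j:ℝ)+q+3/2) (by positivity) i
      rw [hG, show (n:ℝ)+3/2 = ((j:ℝ)+q+3/2) + i by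
        rw [hn, ← hij]; push_cast; ring, h]
      congr 2
      rw [ha, hn, ← hij]; push_cast; ring
    have hdi : (descPochhammer ℝ i).eval a = G / Real.Gamma ((j:ℝ)+q+3/2) := by
      rw [h2]; field_simp
    have hdj : (descPochhammer ℝ j).eval a = G / Real.Gamma ((i:ℝ)+q+3/2) := by
      rw [h1]; field_simp
    rw [hdi, hdj]
    have hfi : (0:ℝ) < i.factorial := by exact_mod_cast i.factorial_pos
    have hfj : (0:ℝ) < j.factorial := by exact_mod_cast j.factorial_pos
    field_simp
  rw [Finset.sum_congr rfl (fun ij hij => key ij.1 ij.2 (Finset.HasAntidiagonal.mem_antidiagonal.mp hij))]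
  rw [← Finset.sum_div]
  congr 1
  rw [Finset.Nat.sum_antidiagonal_eq_sum_range_succ_mk]
  have hfm : (0:ℝ) < m.factorial := by exact_mod_cast m.factorial_pos
  have step : ∀ i ∈ range (m+1),
      ((descPochhammer ℝ i).eval a * (descPochhammer ℝ (m-i)).eval a) /
        ((i.factorial : ℝ) * (m-i).factorial)
        = (m.choose i : ℝ) *
            ((descPochhammer ℝ i).eval a * (descPochhammer ℝ (m-i)).eval a) / m.factorial := by
    intro i hi
    rw [mem_range, Nat.lt_succ_iff] at hi
    have hfact : (m.choose i : ℝ) * i.factorial * (m-i).factorial = m.factorial := by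
      exact_mod_cast Nat.choose_mul_factorial_mul_factorial hi
    have hfi : (0:ℝ) < i.factorial := by exact_mod_cast i.factorial_pos
    have hfmi : (0:ℝ) < (m-i).factorial := by exact_mod_cast (m-i).factorial_pos
    have hch : (0:ℝ) < m.choose i := by exact_mod_cast Nat.choose_pos hi
    rw [← hfact]
    field_simp
  rw [Finset.sum_congr rfl step, ← Finset.sum_div, cv_real m a]
  have h2a : 2*a = ((2*n+1 : ℕ) : ℝ) := by rw [ha]; push_cast; ring
  rw [h2a, descPochhammer_eval_eq_descFactorial, Nat.descFactorial_eq_factorial_mul_choose]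
  push_cast
  field_simp

/-- The spherical Bessel function of the first kind of order `q`, defined by its power
series `j_q(x) = (√π / 2^{q+1}) x^q ∑_{k≥0} (-1)^k (x/2)^{2k} / (k! Γ(k+q+3/2))`. -/
noncomputable def sphBessel (q : ℕ) (x : ℝ) : ℝ :=
  (Real.sqrt Real.pi / 2 ^ (q + 1)) * x ^ q *
    ∑' k : ℕ, (-1 : ℝ) ^ k * (x / 2) ^ (2 * k) /
      (Nat.factorial k * Real.Gamma ((k : ℝ) + (q : ℝ) + 3 / 2))

/-- The sine integral `Si(x) = ∫₀^x sin t / t dt`. -/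
noncomputable def Si (x : ℝ) : ℝ := ∫ t in (0 : ℝ)..x, Real.sin t / t

namespace SphBesselAux

/-- The summand of the defining series. -/
noncomputable def uu (x : ℝ) (q k : ℕ) : ℝ :=
  (-1 : ℝ) ^ k * (x / 2) ^ (2 * k) /
      (Nat.factorial k * Real.Gamma ((k : ℝ) + (q : ℝ) + 3 / 2))

lemma sphBessel_eq (q : ℕ) (x : ℝ) :
    sphBessel q x = (Real.sqrt Real.pi / 2 ^ (q + 1)) * x ^ q * ∑' k : ℕ, uu x q k := by
  simp only [sphBessel, uu]

lemma uu_norm_summable (x : ℝ) (q : ℕ) : Summable fun k => ‖uu x q k‖ := by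
  have hΓq : 0 < Real.Gamma ((q:ℝ) + 3/2) := Real.Gamma_pos_of_pos (by positivity)
  refine Summable.of_nonneg_of_le (fun k => norm_nonneg _) ?_
    ((Real.summable_pow_div_factorial ((x/2)^2)).mul_right (1 / Real.Gamma ((q:ℝ) + 3/2)))
  · intro k
    have hfk : (0:ℝ) < k.factorial := by exact_mod_cast k.factorial_pos
    have hΓk : 0 < Real.Gamma ((k:ℝ) + q + 3/2) := Real.Gamma_pos_of_pos (by positivity)
    have hle : Real.Gamma ((q:ℝ) + 3/2) ≤ Real.Gamma ((k:ℝ) + q + 3/2) := by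
      have h := gamma_factorial_le ((q:ℝ) + 3/2)
        (by have : (0:ℝ) ≤ q := Nat.cast_nonneg q; linarith) k
      have hk1 : (1:ℝ) ≤ k.factorial := by exact_mod_cast k.factorial_pos
      calc Real.Gamma ((q:ℝ) + 3/2) ≤ Real.Gamma ((q:ℝ) + 3/2) * k.factorial := by
            nlinarith
        _ ≤ Real.Gamma ((q:ℝ) + 3/2 + k) := h
        _ = Real.Gamma ((k:ℝ) + q + 3/2) := by ring_nf
    rw [uu]
    rw [norm_div, norm_mul]
    have h1 : ‖(-1 : ℝ)^k‖ = 1 := by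
      rw [norm_pow]; norm_num
    have h2 : ‖(x/2)^(2*k)‖ = ((x/2)^2)^k := by
      rw [Real.norm_eq_abs, abs_pow, pow_mul, sq_abs]
    rw [h1, h2, one_mul]
    have h3 : ‖(k.factorial : ℝ) * Real.Gamma ((k:ℝ) + q + 3/2)‖
        = (k.factorial : ℝ) * Real.Gamma ((k:ℝ) + q + 3/2) := by
      rw [Real.norm_eq_abs, abs_of_pos (by positivity)]
    rw [h3, div_mul_eq_div_div, mul_one_div]
    gcongr
    all_goals first | exact hΓq | exact hle | positivity

lemma step1 (x : ℝ) (q : ℕ) :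
    (∑' k, uu x q k) * (∑' k, uu x q k)
      = ∑' m, ∑ ij ∈ Finset.HasAntidiagonal.antidiagonal m, uu x q ij.1 * uu x q ij.2 :=
  tsum_mul_tsum_eq_tsum_sum_antidiagonal_of_summable_norm
    (uu_norm_summable x q) (uu_norm_summable x q)

lemma step2 (x : ℝ) (q m : ℕ) :
    ∑ ij ∈ Finset.HasAntidiagonal.antidiagonal m, uu x q ij.1 * uu x q ij.2
      = (-1:ℝ)^m * (x/2)^(2*m) * (((2*(q+m)+1).choose m : ℝ) /
          Real.Gamma (((q+m : ℕ):ℝ) + 3/2)^2) := by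
  have key : ∀ ij ∈ Finset.HasAntidiagonal.antidiagonal m, uu x q ij.1 * uu x q ij.2 =
      ((-1:ℝ)^m * (x/2)^(2*m)) * ((1:ℝ) /
        ((ij.1.factorial * Real.Gamma ((ij.1:ℝ) + q + 3/2)) *
         (ij.2.factorial * Real.Gamma ((ij.2:ℝ) + q + 3/2)))) := by
    rintro ⟨i, j⟩ hij
    rw [Finset.HasAntidiagonal.mem_antidiagonal] at hij
    simp only at hij ⊢
    subst hij
    rw [uu, uu]
    ring
  rw [Finset.sum_congr rfl key, ← Finset.mul_sum, sph_inner_sum q m]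

/-- The rearranged double-series summand. -/
noncomputable def ww (x : ℝ) (p : ℕ × ℕ) : ℝ :=
  (-1:ℝ)^p.2 * ((1 + 2*(p.1:ℝ)) * Real.pi * ((2*(p.1+p.2)+1).choose p.2 : ℝ) *
    (x^2)^(p.1+p.2) / (4^(p.1+p.2+1) * Real.Gamma (((p.1+p.2 : ℕ) : ℝ) + 3/2)^2))

lemma ww_eq (x : ℝ) (q m : ℕ) :
    ww x (q, m) = (1 + 2*(q:ℝ)) * (Real.pi / 4^(q+1)) * x^(2*q) *
      ((-1:ℝ)^m * (x/2)^(2*m) * (((2*(q+m)+1).choose m : ℝ) /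
          Real.Gamma (((q+m : ℕ):ℝ) + 3/2)^2)) := by
  rw [ww]
  simp only
  rw [show (x/2)^(2*m) = (x^2)^m / 4^m by
    rw [pow_mul, show (x/2)^2 = x^2/4 by ring, div_pow]]
  rw [show x^(2*q) = (x^2)^q by rw [pow_mul]]
  rw [pow_add, pow_add]
  field_simp
  ring

lemma ww_norm (x : ℝ) (q m : ℕ) :
    ‖ww x (q, m)‖ = (1 + 2*(q:ℝ)) * Real.pi * ((2*(q+m)+1).choose m : ℝ) *
      (x^2)^(q+m) / (4^(q+m+1) * Real.Gamma (((q+m : ℕ) : ℝ) + 3/2)^2) := by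
  rw [ww]
  simp only
  rw [norm_mul]
  have h1 : ‖(-1 : ℝ)^m‖ = 1 := by rw [norm_pow]; norm_num
  rw [h1, one_mul, Real.norm_eq_abs, abs_of_nonneg]
  have hΓ : 0 < Real.Gamma (((q+m : ℕ) : ℝ) + 3/2) := Real.Gamma_pos_of_pos (by positivity)
  positivity

lemma two_n_le (n : ℕ) : (1:ℝ) + 2*(n:ℝ) ≤ 2 * 2^n := by
  induction n with
  | zero => norm_num
  | succ n ih =>
    have h2 : (1:ℝ) ≤ 2^n := one_le_pow₀ (by norm_num)
    push_cast
    rw [pow_succ]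
    push_cast at ih
    nlinarith

lemma choose_sum_le (n : ℕ) :
    ∑ p ∈ Finset.HasAntidiagonal.antidiagonal n, ((2*n+1).choose p.2 : ℝ) ≤ 2^(2*n+1) := by
  have hN : ∑ p ∈ Finset.HasAntidiagonal.antidiagonal n, (2*n+1).choose p.2 ≤ 2^(2*n+1) := by
    rw [Finset.Nat.sum_antidiagonal_eq_sum_range_succ_mk]
    have hrefl : ∑ k ∈ range (n+1), (2*n+1).choose (n-k)
        = ∑ k ∈ range (n+1), (2*n+1).choose k := by
      simpa using Finset.sum_range_reflect (fun k => (2*n+1).choose k) (n+1)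
    rw [hrefl]
    calc ∑ k ∈ range (n+1), (2*n+1).choose k
        ≤ ∑ k ∈ range (2*n+2), (2*n+1).choose k :=
          Finset.sum_le_sum_of_subset (by intro k hk; rw [mem_range] at *; omega)
      _ = 2^(2*n+1) := Nat.sum_range_choose _
  calc ∑ p ∈ Finset.HasAntidiagonal.antidiagonal n, ((2*n+1).choose p.2 : ℝ)
      = ((∑ p ∈ Finset.HasAntidiagonal.antidiagonal n, (2*n+1).choose p.2 : ℕ) : ℝ) := by push_cast; rfl
    _ ≤ ((2^(2*n+1) : ℕ) : ℝ) := by exact_mod_cast hN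
    _ = 2^(2*n+1) := by push_cast; rfl

lemma bound_lemma (x : ℝ) (n : ℕ) :
    ((1 + 2*(n:ℝ)) * Real.pi * (x^2)^n / (4^(n+1) * Real.Gamma ((n:ℝ) + 3/2)^2)) * 2^(2*n+1)
      ≤ (Real.pi / Real.Gamma (3/2:ℝ)^2) * ((2*x^2)^n / n.factorial) := by
  have hΓ32 : 0 < Real.Gamma (3/2 : ℝ) := Real.Gamma_pos_of_pos (by norm_num)
  have hΓn : 0 < Real.Gamma ((n:ℝ) + 3/2) := Real.Gamma_pos_of_pos (by positivity)
  have hΓnle : Real.Gamma (3/2:ℝ) * n.factorial ≤ Real.Gamma ((n:ℝ) + 3/2) := by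
    have := gamma_factorial_le (3/2:ℝ) (by norm_num) n
    calc Real.Gamma (3/2:ℝ) * n.factorial ≤ Real.Gamma ((3/2:ℝ) + n) := this
      _ = Real.Gamma ((n:ℝ) + 3/2) := by ring_nf
  have hfn : (1:ℝ) ≤ n.factorial := by exact_mod_cast n.factorial_pos
  have h2n : (1:ℝ) + 2*(n:ℝ) ≤ 2 * 2^n := two_n_le n
  set Y : ℝ := (x^2)^n with hY
  have hYnn : (0:ℝ) ≤ Y := by positivity
  have h4 : ((4:ℝ))^(n+1) = 2^(2*n+1) * 2 := by
    rw [show (4:ℝ) = 2^2 by norm_num, ← pow_mul,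
      show 2*(n+1) = (2*n+1)+1 by ring, pow_succ]
  have h2x : ((2:ℝ)*x^2)^n = 2^n * Y := by rw [mul_pow, hY]
  rw [h4, h2x, div_mul_eq_mul_div, div_mul_div_comm]
  rw [div_le_div_iff₀ (by positivity) (by positivity)]
  have hfp : (0:ℝ) < n.factorial := by positivity
  calc (1 + 2*(n:ℝ)) * Real.pi * Y * 2^(2*n+1) * (Real.Gamma (3/2:ℝ)^2 * n.factorial)
      = (Real.pi * Y * 2^(2*n+1) * Real.Gamma (3/2:ℝ)^2) * ((1 + 2*(n:ℝ)) * n.factorial) := by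
        ring
    _ ≤ (Real.pi * Y * 2^(2*n+1) * Real.Gamma (3/2:ℝ)^2) *
          ((2 * 2^n) * (n.factorial:ℝ)^2) := by
        apply mul_le_mul_of_nonneg_left ?_ (by positivity)
        calc (1 + 2*(n:ℝ)) * n.factorial ≤ (2 * 2^n) * n.factorial :=
              mul_le_mul_of_nonneg_right h2n (by positivity)
          _ ≤ 2 * 2^n * (n.factorial:ℝ)^2 := by
                have hsq : (n.factorial:ℝ) ≤ (n.factorial:ℝ)^2 := by nlinarith
                exact mul_le_mul_of_nonneg_left hsq (by positivity)
    _ = (Real.pi * (2^n * Y) * (2^(2*n+1) * 2)) * (Real.Gamma (3/2:ℝ) * n.factorial)^2 := by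
        ring
    _ ≤ (Real.pi * (2^n * Y) * (2^(2*n+1) * 2)) * Real.Gamma ((n:ℝ) + 3/2)^2 := by
        apply mul_le_mul_of_nonneg_left ?_ (by positivity)
        exact pow_le_pow_left₀ (by positivity) hΓnle 2
    _ = Real.pi * (2^n * Y) * (2^(2*n+1) * 2 * Real.Gamma ((n:ℝ) + 3/2)^2) := by
        ring

lemma ww_summable (x : ℝ) : Summable (ww x) := by
  apply Summable.of_norm
  rw [← Finset.HasAntidiagonal.sigmaAntidiagonalEquivProd.summable_iff]
  refine (summable_sigma_of_nonneg (fun _ => norm_nonneg _)).mpr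
    ⟨fun n => Summable.of_finite, ?_⟩
  refine Summable.of_nonneg_of_le
    (fun n => tsum_nonneg fun p => norm_nonneg _) ?_
    ((Real.summable_pow_div_factorial (2*x^2)).mul_left (Real.pi / Real.Gamma (3/2:ℝ)^2))
  intro n
  have htsum : (∑' p : Finset.HasAntidiagonal.antidiagonal n,
      ‖ww x ((Finset.HasAntidiagonal.sigmaAntidiagonalEquivProd ⟨n, p⟩ : ℕ × ℕ))‖)
      = ∑ p ∈ Finset.HasAntidiagonal.antidiagonal n, ‖ww x p‖ := by
    exact Finset.tsum_subtype (Finset.HasAntidiagonal.antidiagonal n) (fun p => ‖ww x p‖)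
  have hΓn : 0 < Real.Gamma ((n:ℝ) + 3/2) := Real.Gamma_pos_of_pos (by positivity)
  set Y : ℝ := (x^2)^n with hY
  have hYnn : (0:ℝ) ≤ Y := by positivity
  have hbound : ∀ p ∈ Finset.HasAntidiagonal.antidiagonal n,
      ‖ww x p‖ ≤ ((1 + 2*(n:ℝ)) * Real.pi * Y / (4^(n+1) *
        Real.Gamma ((n:ℝ) + 3/2)^2)) * ((2*n+1).choose p.2 : ℝ) := by
    rintro ⟨q, m⟩ hp
    rw [Finset.HasAntidiagonal.mem_antidiagonal] at hp
    simp only at hp ⊢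
    rw [ww_norm, hp]
    have hq : (q:ℝ) ≤ n := by
      have : q ≤ n := by omega
      exact_mod_cast this
    calc (1 + 2*(q:ℝ)) * Real.pi * ((2*n+1).choose m : ℝ) * Y /
          (4^(n+1) * Real.Gamma (((n:ℕ):ℝ) + 3/2)^2)
        ≤ (1 + 2*(n:ℝ)) * Real.pi * ((2*n+1).choose m : ℝ) * Y /
          (4^(n+1) * Real.Gamma (((n:ℕ):ℝ) + 3/2)^2) := by
          gcongr
          all_goals first | positivity | linarith
      _ = ((1 + 2*(n:ℝ)) * Real.pi * Y / (4^(n+1) *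
            Real.Gamma ((n:ℝ) + 3/2)^2)) * ((2*n+1).choose m : ℝ) := by
          ring
  calc (∑' p : Finset.HasAntidiagonal.antidiagonal n,
      ‖ww x ((Finset.HasAntidiagonal.sigmaAntidiagonalEquivProd ⟨n, p⟩ : ℕ × ℕ))‖)
      = ∑ p ∈ Finset.HasAntidiagonal.antidiagonal n, ‖ww x p‖ := htsum
    _ ≤ ∑ p ∈ Finset.HasAntidiagonal.antidiagonal n, ((1 + 2*(n:ℝ)) * Real.pi * Y / (4^(n+1) *
          Real.Gamma ((n:ℝ) + 3/2)^2)) * ((2*n+1).choose p.2 : ℝ) :=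
        Finset.sum_le_sum hbound
    _ = ((1 + 2*(n:ℝ)) * Real.pi * Y / (4^(n+1) *
          Real.Gamma ((n:ℝ) + 3/2)^2)) * ∑ p ∈ Finset.HasAntidiagonal.antidiagonal n, ((2*n+1).choose p.2 : ℝ) := by
        rw [Finset.mul_sum]
    _ ≤ ((1 + 2*(n:ℝ)) * Real.pi * Y / (4^(n+1) *
          Real.Gamma ((n:ℝ) + 3/2)^2)) * 2^(2*n+1) := by
        apply mul_le_mul_of_nonneg_left (choose_sum_le n)
        positivity
    _ ≤ (Real.pi / Real.Gamma (3/2:ℝ)^2) * ((2*x^2)^n / n.factorial) := bound_lemma x n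

lemma fiber_hasSum (x : ℝ) (q : ℕ) :
    HasSum (fun m => ww x (q, m)) ((1 + 2*(q:ℝ)) * sphBessel q x ^ 2) := by
  have hsummable : Summable fun m => ww x (q, m) := (ww_summable x).prod_factor q
  have heq : ∑' m, ww x (q, m) = (1 + 2*(q:ℝ)) * sphBessel q x ^ 2 := by
    have h1 : ∀ m, ww x (q, m) = ((1 + 2*(q:ℝ)) * (Real.pi / 4^(q+1)) * x^(2*q)) *
        (∑ ij ∈ Finset.HasAntidiagonal.antidiagonal m, uu x q ij.1 * uu x q ij.2) := by
      intro m
      rw [ww_eq, step2]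
    rw [tsum_congr h1, tsum_mul_left, ← step1, sphBessel_eq]
    have hπ : Real.sqrt Real.pi ^ 2 = Real.pi := Real.sq_sqrt Real.pi_pos.le
    have h4 : ((2:ℝ)^(q+1))^2 = 4^(q+1) := by
      rw [← pow_mul, mul_comm (q+1) 2, pow_mul]; norm_num
    have hx : (x^q)^2 = x^(2*q) := by rw [← pow_mul, mul_comm]
    rw [mul_pow, mul_pow, div_pow, hπ, h4, hx]
    ring
  rw [← heq]
  exact hsummable.hasSum

lemma diag_sum (x : ℝ) (n : ℕ) :
    ∑ p ∈ Finset.HasAntidiagonal.antidiagonal n, ww x p = if n = 0 then 1 else 0 := by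
  have hΓn : 0 < Real.Gamma ((n:ℝ) + 3/2) := Real.Gamma_pos_of_pos (by positivity)
  set D : ℝ := Real.pi * (x^2)^n / (4^(n+1) * Real.Gamma ((n:ℝ) + 3/2)^2) with hD
  rw [Finset.Nat.sum_antidiagonal_eq_sum_range_succ_mk]
  have hterm : ∀ k ∈ range (n+1), ww x (k, n-k)
      = D * ((-1:ℝ)^(n-k) * ((1 + 2*(k:ℝ)) * ((2*n+1).choose (n-k) : ℝ))) := by
    intro k hk
    rw [mem_range, Nat.lt_succ_iff] at hk
    rw [ww]
    simp only
    rw [Nat.add_sub_cancel' hk, hD]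
    field_simp
  rw [Finset.sum_congr rfl hterm, ← Finset.mul_sum]
  have hZ : ∑ k ∈ range (n+1), ((-1:ℝ)^(n-k) * ((1 + 2*(k:ℝ)) * ((2*n+1).choose (n-k) : ℝ)))
      = ((if n = 0 then 1 else 0 : ℤ) : ℝ) := by
    rw [← outer_sum n]
    have hrefl := Finset.sum_range_reflect
      (fun j => (-1 : ℤ)^j * ((1 + 2*((n-j : ℕ)):ℤ) * (2*n+1).choose j)) (n+1)
    have hrefl' : ∑ k ∈ range (n+1),
        (-1 : ℤ)^(n-k) * ((1 + 2*((n-(n-k) : ℕ)):ℤ) * (2*n+1).choose (n-k))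
        = ∑ j ∈ range (n+1), (-1 : ℤ)^j * ((1 + 2*((n-j : ℕ)):ℤ) * (2*n+1).choose j) := by
      simpa using hrefl
    rw [← hrefl']
    push_cast
    apply Finset.sum_congr rfl
    intro k hk
    rw [mem_range, Nat.lt_succ_iff] at hk
    rw [show n - (n - k) = k from by omega]
  rw [hZ]
  rcases Nat.eq_zero_or_pos n with rfl | hn
  · simp only [if_pos rfl, Int.cast_one, mul_one]
    rw [hD]
    have hΓ32 : Real.Gamma (((0:ℕ):ℝ) + 3/2) = Real.sqrt Real.pi / 2 := by
      rw [show ((0:ℕ):ℝ) + 3/2 = 1/2 + 1 by norm_num,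
        Real.Gamma_add_one (by norm_num), Real.Gamma_one_half_eq]
      ring
    rw [hΓ32]
    have hπ : Real.sqrt Real.pi ^ 2 = Real.pi := Real.sq_sqrt Real.pi_pos.le
    have h24 : (Real.sqrt Real.pi / 2)^2 = Real.pi / 4 := by
      rw [div_pow, hπ]; norm_num
    rw [h24]
    have hpi := Real.pi_ne_zero
    field_simp
    norm_num
  · rw [if_neg hn.ne', if_neg hn.ne']
    push_cast
    ring

end SphBesselAux

/-- For all real `x`, `∑_{q=0}^∞ (1+2q) j_q(x)²` converges to `1`. -/
theorem sphBessel_hasSum_one (x : ℝ) :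
    HasSum (fun q : ℕ => (1 + 2 * (q : ℝ)) * sphBessel q x ^ 2) 1 := by
  classical
  have hsum : Summable (SphBesselAux.ww x) := SphBesselAux.ww_summable x
  obtain ⟨s, hs⟩ := hsum
  have hσ : HasSum ((SphBesselAux.ww x) ∘ Finset.HasAntidiagonal.sigmaAntidiagonalEquivProd) s :=
    (Finset.HasAntidiagonal.sigmaAntidiagonalEquivProd.hasSum_iff).mpr hs
  have hfib : ∀ n : ℕ, HasSum (fun p : Finset.HasAntidiagonal.antidiagonal n =>
      ((SphBesselAux.ww x) ∘ Finset.HasAntidiagonal.sigmaAntidiagonalEquivProd) ⟨n, p⟩)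
      (∑ p ∈ Finset.HasAntidiagonal.antidiagonal n, SphBesselAux.ww x p) := by
    intro n
    exact (Finset.HasAntidiagonal.antidiagonal n).hasSum (SphBesselAux.ww x)
  have hgrouped : HasSum (fun n => ∑ p ∈ Finset.HasAntidiagonal.antidiagonal n, SphBesselAux.ww x p) s :=
    hσ.sigma hfib
  have hone : HasSum (fun n => ∑ p ∈ Finset.HasAntidiagonal.antidiagonal n, SphBesselAux.ww x p) 1 := by
    have hfe : (fun n => ∑ p ∈ Finset.HasAntidiagonal.antidiagonal n, SphBesselAux.ww x p)
        = fun n => if n = 0 then (1:ℝ) else 0 := funext (SphBesselAux.diag_sum x)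
    rw [hfe]
    simpa using hasSum_ite_eq 0 (1:ℝ)
  have hs1 : s = 1 := hgrouped.unique hone
  rw [hs1] at hs
  exact hs.prod_fiberwise (fun q => SphBesselAux.fiber_hasSum x q)
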